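/- The number of derangements of [n] equals the number of (n+1)-cycles σ in S_{n+1} such that σ(j) ≠ j+1 for all j ∈ [n]. -/

import Mathlib

/-- `σ` consists of a single cycle through all of `Fin n` (an `n`-cycle). -/
def IsFullCycle {n : ℕ} (σ : Equiv.Perm (Fin n)) : Prop :=
  ∀ x y : Fin n, ∃ i : ℕ, (σ ^ i) x = y

attribute [-instance] instDecidableEqFin

open List Equiv Equiv.Perm

namespace S14

variable {α : Type*} [Fintype α] [LinearOrder α]

/-- length of the cycle of `x` under `F` (1 for fixed points). -/
def blockLen (F : Perm α) (x : α) : ℕ := max 1 ((F.cycleOf x).support.card)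

/-- the cycle of `x` as a list starting at `x`. -/
def blockList (F : Perm α) (x : α) : List α :=
  (List.range (blockLen F x)).map fun k => (F ^ k) x

lemma length_blockList (F : Perm α) (x : α) : (blockList F x).length = blockLen F x := by
  simp [blockList]

lemma blockLen_pos (F : Perm α) (x : α) : 0 < blockLen F x := by
  simp [blockLen]

lemma getElem_blockList (F : Perm α) (x : α) (i : ℕ) (h : i < (blockList F x).length) :
    (blockList F x)[i] = (F ^ i) x := by
  simp [blockList]

lemma blockLen_eq (F : Perm α) {x : α} (hx : x ∈ F.support) :
    blockLen F x = (F.cycleOf x).support.card := by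
  have h2 : 2 ≤ (F.cycleOf x).support.card := by
    have := (Equiv.Perm.two_le_length_toList_iff_mem_support (p := F) (x := x)).mpr hx
    simpa using this
  unfold blockLen; omega

lemma blockList_eq_toList (F : Perm α) {x : α} (hx : x ∈ F.support) :
    blockList F x = F.toList x := by
  rw [blockList, Equiv.Perm.toList, blockLen_eq F hx]
  rw [← List.range_map_iterate]; simp [Equiv.Perm.iterate_eq_pow]

lemma blockList_of_not_mem_support (F : Perm α) {x : α} (hx : x ∉ F.support) :
    blockList F x = [x] := by
  have h0 : (F.cycleOf x).support = ∅ := Equiv.Perm.support_cycleOf_eq_nil_iff.mpr hx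
  simp [blockList, blockLen, h0, List.range_succ, List.range_zero]

lemma blockList_head (F : Perm α) (x : α) :
    blockList F x = x :: (blockList F x).tail := by
  have h : 0 < (blockList F x).length := by rw [length_blockList]; exact blockLen_pos F x
  have h0 : (blockList F x)[0] = x := by simpa using getElem_blockList F x 0 h
  cases hb : blockList F x with
  | nil => rw [hb] at h; simp at h
  | cons a t =>
    have : a = x := by simp only [hb] at h0; simpa using h0
    simp [this]

lemma blockList_ne_nil (F : Perm α) (x : α) : blockList F x ≠ [] := by
  rw [blockList_head F x]; exact List.cons_ne_nil _ _

lemma mem_blockList {F : Perm α} {x y : α} : y ∈ blockList F x ↔ F.SameCycle x y := by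
  by_cases hx : x ∈ F.support
  · rw [blockList_eq_toList F hx, Equiv.Perm.mem_toList_iff]
    exact ⟨fun h => h.1, fun h => ⟨h, hx⟩⟩
  · rw [blockList_of_not_mem_support F hx]
    simp only [List.mem_singleton]
    constructor
    · rintro rfl; exact Equiv.Perm.SameCycle.refl _ _
    · rintro ⟨k, hk⟩
      rw [← hk]
      exact Equiv.Perm.zpow_apply_eq_self_of_apply_eq_self
        (Equiv.Perm.notMem_support.mp hx) k

lemma nodup_blockList (F : Perm α) (x : α) : (blockList F x).Nodup := by
  by_cases hx : x ∈ F.support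
  · rw [blockList_eq_toList F hx]; exact F.nodup_toList x
  · rw [blockList_of_not_mem_support F hx]; simp

lemma pow_blockLen (F : Perm α) (x : α) : (F ^ blockLen F x) x = x := by
  by_cases hx : x ∈ F.support
  · have h2 := blockLen_eq F hx
    have := F.pow_mod_card_support_cycleOf_self_apply ((F.cycleOf x).support.card) x
    rw [Nat.mod_self, pow_zero] at this
    rw [h2, ← this]; rfl
  · have h1 : blockLen F x = 1 := by
      have h0 : (F.cycleOf x).support = ∅ := Equiv.Perm.support_cycleOf_eq_nil_iff.mpr hx
      simp [blockLen, h0]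
    rw [h1, pow_one]; exact Equiv.Perm.notMem_support.mp hx

lemma apply_getLast_blockList (F : Perm α) (x : α) (h : blockList F x ≠ []) :
    F ((blockList F x).getLast h) = x := by
  have h1 : blockLen F x - 1 + 1 = blockLen F x := Nat.succ_pred_eq_of_pos (blockLen_pos F x)
  have h2 : F ((F ^ (blockLen F x - 1)) x) = (F ^ (blockLen F x - 1 + 1)) x := by
    rw [pow_succ']; rfl
  rw [List.getLast_eq_getElem, getElem_blockList, length_blockList, h2, h1, pow_blockLen]

lemma formPerm_blockList (F : Perm α) {x y : α} (hy : y ∈ blockList F x) :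
    (blockList F x).formPerm y = F y := by
  by_cases hx : x ∈ F.support
  · rw [blockList_eq_toList F hx] at hy ⊢
    rw [Equiv.Perm.formPerm_toList, Equiv.Perm.cycleOf_apply, if_pos]
    exact (Equiv.Perm.mem_toList_iff.mp hy).1
  · rw [blockList_of_not_mem_support F hx] at hy ⊢
    simp only [List.mem_singleton] at hy
    subst hy
    simp [List.formPerm_singleton, Equiv.Perm.notMem_support.mp hx]

/-- minimum of the cycle of `x`. -/
def cmin (F : Perm α) (x : α) : α :=
  ((blockList F x).toFinset).min'
    ⟨x, List.mem_toFinset.mpr (mem_blockList.mpr (Equiv.Perm.SameCycle.refl F x))⟩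

lemma cmin_mem (F : Perm α) (x : α) : cmin F x ∈ blockList F x :=
  List.mem_toFinset.mp (Finset.min'_mem _ _)

lemma cmin_le (F : Perm α) {x y : α} (hy : y ∈ blockList F x) : cmin F x ≤ y :=
  Finset.min'_le _ _ (List.mem_toFinset.mpr hy)

lemma sameCycle_cmin (F : Perm α) (x : α) : F.SameCycle x (cmin F x) :=
  mem_blockList.mp (cmin_mem F x)

lemma cmin_eq_of_sameCycle {F : Perm α} {x y : α} (h : F.SameCycle x y) :
    cmin F x = cmin F y := by
  apply _root_.le_antisymm
  · exact cmin_le F (mem_blockList.mpr (h.trans (sameCycle_cmin F y)))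
  · exact cmin_le F (mem_blockList.mpr (h.symm.trans (sameCycle_cmin F x)))

lemma cmin_cmin (F : Perm α) (x : α) : cmin F (cmin F x) = cmin F x :=
  (cmin_eq_of_sameCycle (sameCycle_cmin F x)).symm

lemma cmin_le_self (F : Perm α) (x : α) : cmin F x ≤ x :=
  cmin_le F (mem_blockList.mpr (Equiv.Perm.SameCycle.refl F x))


/-! ### the list of cycle minima, in decreasing order -/

def listM (F : Perm α) : List α :=
  ((Finset.univ.filter fun x => cmin F x = x).sort (· ≤ ·)).reverse

lemma mem_listM {F : Perm α} {x : α} : x ∈ listM F ↔ cmin F x = x := by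
  simp [listM, Finset.mem_sort, Finset.mem_filter]

lemma sorted_listM (F : Perm α) : (listM F).Pairwise (· > ·) := by
  have := List.sortedLT_iff_pairwise.mp (Finset.sortedLT_sort (Finset.univ.filter fun x => cmin F x = x))
  exact List.pairwise_reverse.mpr this

lemma nodup_listM (F : Perm α) : (listM F).Nodup := by
  rw [listM, List.nodup_reverse]
  exact Finset.sort_nodup _ _

/-! ### the big list -/

def bigL (F : Perm α) : List α := (listM F).flatMap (blockList F)

lemma mem_bigL (F : Perm α) (y : α) : y ∈ bigL F := by
  rw [bigL, List.mem_flatMap]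
  exact ⟨cmin F y, mem_listM.mpr (cmin_cmin F y), mem_blockList.mpr (sameCycle_cmin F y).symm⟩

lemma nodup_bigL (F : Perm α) : (bigL F).Nodup := by
  rw [bigL, List.nodup_flatMap]
  refine ⟨fun m _ => nodup_blockList F m, ?_⟩
  refine (nodup_listM F).imp_of_mem ?_
  intro a b ha hb hab
  intro z hza hzb
  apply hab
  have h1 : F.SameCycle a z := mem_blockList.mp hza
  have h2 : F.SameCycle b z := mem_blockList.mp hzb
  have h3 : cmin F a = cmin F b := by
    rw [cmin_eq_of_sameCycle h1, cmin_eq_of_sameCycle h2]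
  rw [← mem_listM.mp ha, ← mem_listM.mp hb, h3]

lemma toFinset_bigL (F : Perm α) : (bigL F).toFinset = Finset.univ :=
  Finset.eq_univ_iff_forall.mpr fun y => List.mem_toFinset.mpr (mem_bigL F y)

lemma length_bigL (F : Perm α) : (bigL F).length = Fintype.card α := by
  rw [← List.toFinset_card_of_nodup (nodup_bigL F), toFinset_bigL, Finset.card_univ]

/-! ### parsing a word into blocks -/

def parse : List α → List (List α)
  | [] => []
  | a :: t => (a :: t.takeWhile fun b => a < b) :: parse (t.dropWhile fun b => a < b)
  termination_by l => l.length
  decreasing_by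
    simp only [List.length_cons]
    have := (List.dropWhile_sublist (l := t) (p := fun b => decide (a < b))).length_le
    omega

lemma takeWhile_append_eq (p : α → Bool) (t r : List α)
    (ht : ∀ y ∈ t, p y = true) (hr : ∀ z ∈ r.head?, p z = false) :
    (t ++ r).takeWhile p = t ∧ (t ++ r).dropWhile p = r := by
  induction t with
  | nil =>
    simp only [List.nil_append]
    cases r with
    | nil => simp
    | cons z r' =>
      have hz : p z = false := hr z rfl
      simp [List.takeWhile_cons, List.dropWhile_cons, hz]
  | cons y t' ih =>
    have hy : p y = true := ht y (List.mem_cons_self)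
    have h2 := ih (fun y h => ht y (List.mem_cons_of_mem _ h))
    simp [List.takeWhile_cons, List.dropWhile_cons, hy, h2.1, h2.2]

lemma parse_block_append (m : α) (tb r : List α) (htb : ∀ y ∈ tb, m < y)
    (hr : ∀ z ∈ r.head?, z < m) :
    parse ((m :: tb) ++ r) = (m :: tb) :: parse r := by
  have h := takeWhile_append_eq (fun b => decide (m < b)) tb r
    (fun y hy => by simpa using htb y hy)
    (fun z hz => by simpa using not_lt.mpr (le_of_lt (hr z hz)))
  rw [List.cons_append, parse, h.1, h.2]

lemma tail_blockList_gt (F : Perm α) {m : α} (hm : cmin F m = m) :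
    ∀ y ∈ (blockList F m).tail, m < y := by
  intro y hy
  have hymem : y ∈ blockList F m := List.mem_of_mem_tail hy
  have h1 : m ≤ y := by rw [← hm]; exact cmin_le F hymem
  have hnd := nodup_blockList F m
  rw [blockList_head F m] at hnd
  have hme : m ∉ (blockList F m).tail := (List.nodup_cons.mp hnd).1
  exact lt_of_le_of_ne h1 (fun e => hme (by rw [← e] at hy; exact hy))

lemma head?_flatMap_blockList (F : Perm α) (ms : List α) :
    ∀ z ∈ (ms.flatMap (blockList F)).head?, z ∈ ms := by
  cases ms with
  | nil => intro z hz; simp at hz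
  | cons m t =>
    intro z hz
    rw [List.flatMap_cons] at hz
    rw [blockList_head F m] at hz
    simp only [List.cons_append, List.head?_cons, Option.mem_def, Option.some.injEq] at hz
    subst hz
    exact List.mem_cons_self

lemma parse_flatMap (F : Perm α) :
    ∀ ms : List α, ms.Pairwise (· > ·) → (∀ m ∈ ms, cmin F m = m) →
      parse (ms.flatMap (blockList F)) = ms.map (blockList F) := by
  intro ms
  induction ms with
  | nil => intro _ _; simp [parse]
  | cons m t ih =>
    intro hs hm
    have hmm : cmin F m = m := hm m (List.mem_cons_self)
    rw [List.flatMap_cons]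
    conv_lhs => rw [blockList_head F m]
    rw [parse_block_append m _ _ (tail_blockList_gt F hmm)
      (fun z hz => List.rel_of_pairwise_cons hs (head?_flatMap_blockList F t z hz))]
    rw [ih hs.of_cons (fun x hx => hm x (List.mem_cons_of_mem _ hx)), List.map_cons,
      ← blockList_head F m]

lemma chain'_blockList (F : Perm α) (x : α) :
    List.IsChain (fun a b => b = F a) (blockList F x) := by
  rw [List.isChain_iff_getElem]
  intro i h
  rw [getElem_blockList, getElem_blockList,
    pow_succ']
  rfl

lemma chain'_flatMap_blockList (F : Perm α) :
    ∀ ms : List α, ms.Pairwise (· > ·) → (∀ m ∈ ms, cmin F m = m) →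
      List.IsChain (fun a b => b = F a ∨ b < a) (ms.flatMap (blockList F)) := by
  intro ms
  induction ms with
  | nil => intro _ _; simp
  | cons m t ih =>
    intro hs hm
    rw [List.flatMap_cons, List.isChain_append]
    refine ⟨(chain'_blockList F m).imp (fun a b h => Or.inl h),
      ih hs.of_cons (fun x hx => hm x (List.mem_cons_of_mem _ hx)), ?_⟩
    intro x hx z hz
    have hzt : z ∈ t := head?_flatMap_blockList F t z hz
    have hzm : z < m := List.rel_of_pairwise_cons hs hzt
    have hxmem : x ∈ blockList F m := by
      have h1 : (blockList F m).getLast? = some x := hx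
      have h2 := List.getLast?_eq_getLast (l := blockList F m) (blockList_ne_nil F m)
      rw [h2, Option.some.injEq] at h1
      rw [← h1]
      exact List.getLast_mem _
    have hmx : m ≤ x := by rw [← hm m (List.mem_cons_self)]; exact cmin_le F hxmem
    exact Or.inr (lt_of_lt_of_le hzm hmx)

lemma chain'_bigL (F : Perm α) :
    List.IsChain (fun a b => b = F a ∨ b < a) (bigL F) :=
  chain'_flatMap_blockList F (listM F) (sorted_listM F) (fun _ hm => mem_listM.mp hm)


/-! ### last element of the big list -/

lemma getLast_congr {β : Type*} {l₁ l₂ : List β} (h₁ : l₁ ≠ []) (h₂ : l₂ ≠ [])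
    (h : l₁ = l₂) : l₁.getLast h₁ = l₂.getLast h₂ := by subst h; rfl

lemma getLast_eq_min_of_sorted (b : α) :
    ∀ l : List α, l.Pairwise (· > ·) → b ∈ l → (∀ y ∈ l, b ≤ y) → ∀ h : l ≠ [],
      l.getLast h = b := by
  intro l
  induction l with
  | nil => intro _ hb; simp at hb
  | cons a t ih =>
    intro hs hb hle h
    cases t with
    | nil =>
      simp only [List.mem_singleton] at hb
      simp [hb]
    | cons c t' =>
      have hbt : b ∈ c :: t' := by
        rcases List.mem_cons.mp hb with rfl | hbt
        · exfalso
          have hac : b > c := List.rel_of_pairwise_cons hs List.mem_cons_self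
          have hcb := hle c (List.mem_cons_of_mem _ (List.mem_cons_self))
          exact absurd hcb (not_le.mpr hac)
        · exact hbt
      rw [List.getLast_cons (List.cons_ne_nil _ _)]
      exact ih hs.of_cons hbt (fun y hy => hle y (List.mem_cons_of_mem _ hy)) _

lemma cmin_bot [Nonempty α] (F : Perm α) :
    cmin F (Finset.univ.min' Finset.univ_nonempty) = Finset.univ.min' Finset.univ_nonempty :=
  _root_.le_antisymm (cmin_le_self F _) (Finset.min'_le _ _ (Finset.mem_univ _))

lemma listM_ne_nil [Nonempty α] (F : Perm α) : listM F ≠ [] :=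
  List.ne_nil_of_mem (mem_listM.mpr (cmin_bot F))

lemma getLast_listM [Nonempty α] (F : Perm α) (h : listM F ≠ []) :
    (listM F).getLast h = Finset.univ.min' Finset.univ_nonempty :=
  getLast_eq_min_of_sorted _ _ (sorted_listM F) (mem_listM.mpr (cmin_bot F))
    (fun y _ => Finset.min'_le _ _ (Finset.mem_univ _)) h

lemma getLast_flatMap_blockList (F : Perm α) :
    ∀ (ms : List α) (h : ms ≠ []) (hbig : ms.flatMap (blockList F) ≠ []),
      (ms.flatMap (blockList F)).getLast hbig
        = (blockList F (ms.getLast h)).getLast (blockList_ne_nil F _) := by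
  intro ms
  induction ms with
  | nil => intro h; exact absurd rfl h
  | cons m t ih =>
    intro h hbig
    cases t with
    | nil =>
      simp only [List.flatMap_cons, List.flatMap_nil, List.append_nil] at hbig ⊢
      simp
    | cons c t' =>
      have hne : ((c :: t').flatMap (blockList F)) ≠ [] := by
        rw [List.flatMap_cons]
        intro hcontra
        exact blockList_ne_nil F c (List.append_eq_nil_iff.mp hcontra).1
      have happ : blockList F m ++ (c :: t').flatMap (blockList F) ≠ [] := by
        intro hc
        exact hne (List.append_eq_nil_iff.mp hc).2
      have hstep : (((m :: c :: t')).flatMap (blockList F)).getLast hbig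
          = ((c :: t').flatMap (blockList F)).getLast hne := by
        rw [getLast_congr hbig happ (by rw [List.flatMap_cons]), List.getLast_append]
        rw [dif_neg (by simpa using hne)]
      rw [hstep, ih (List.cons_ne_nil _ _) hne, List.getLast_cons (List.cons_ne_nil _ _)]

lemma bigL_ne_nil [Nonempty α] (F : Perm α) : bigL F ≠ [] :=
  List.ne_nil_of_mem (mem_bigL F (Classical.arbitrary α))

lemma apply_getLast_bigL [Nonempty α] (F : Perm α) (h : bigL F ≠ []) :
    F ((bigL F).getLast h) = Finset.univ.min' Finset.univ_nonempty := by
  have h' : (listM F).flatMap (blockList F) ≠ [] := h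
  have heq : (bigL F).getLast h = ((listM F).flatMap (blockList F)).getLast h' := rfl
  rw [heq, getLast_flatMap_blockList F (listM F) (listM_ne_nil F) h', apply_getLast_blockList,
    getLast_listM]

/-! ### adjacency in the big list -/

lemma adj_flatMap {β : Type*} (g : α → List β) (ms : List α) (m : α) (hm : m ∈ ms)
    (i : ℕ) (hi : i + 1 < (g m).length) :
    ∃ j, (ms.flatMap g)[j]? = (g m)[i]? ∧ (ms.flatMap g)[j+1]? = (g m)[i+1]? := by
  induction ms with
  | nil => simp at hm
  | cons a t ih =>
    rcases List.mem_cons.mp hm with rfl | hmt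
    · exact ⟨i, by rw [List.flatMap_cons, List.getElem?_append, if_pos (by omega)],
        by rw [List.flatMap_cons, List.getElem?_append, if_pos hi]⟩
    · obtain ⟨j, h1, h2⟩ := ih hmt
      refine ⟨(g a).length + j, ?_, ?_⟩
      · rw [List.flatMap_cons, List.getElem?_append_right (by omega),
          Nat.add_sub_cancel_left, h1]
      · rw [List.flatMap_cons, show (g a).length + j + 1 = (g a).length + (j+1) by omega,
          List.getElem?_append_right (by omega), Nat.add_sub_cancel_left, h2]

lemma adj_bigL (F : Perm α) {x : α} (hne : F x ≠ cmin F x) :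
    ∃ j, (bigL F)[j]? = some x ∧ (bigL F)[j+1]? = some (F x) := by
  have hm : cmin F x ∈ listM F := mem_listM.mpr (cmin_cmin F x)
  have hxb : x ∈ blockList F (cmin F x) := mem_blockList.mpr (sameCycle_cmin F x).symm
  obtain ⟨i, hi, hix⟩ := List.mem_iff_getElem.mp hxb
  rw [getElem_blockList] at hix
  have hi1 : i + 1 < (blockList F (cmin F x)).length := by
    by_contra hcon
    have hieq : i = (blockList F (cmin F x)).length - 1 := by omega
    have hlast := apply_getLast_blockList F (cmin F x) (blockList_ne_nil F _)
    rw [List.getLast_eq_getElem, getElem_blockList] at hlast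
    apply hne
    calc F x = F ((F ^ i) (cmin F x)) := by rw [hix]
      _ = F ((F ^ ((blockList F (cmin F x)).length - 1)) (cmin F x)) := by rw [← hieq]
      _ = cmin F x := hlast
  have hx' : (blockList F (cmin F x))[i]? = some x := by
    rw [List.getElem?_eq_getElem hi, getElem_blockList, hix]
  have hFx : (blockList F (cmin F x))[i+1]? = some (F x) := by
    rw [List.getElem?_eq_getElem hi1, getElem_blockList, pow_succ', Equiv.Perm.mul_apply, hix]
  obtain ⟨j, h1, h2⟩ := adj_flatMap (blockList F) (listM F) (cmin F x) hm i hi1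
  have hb1 : (bigL F)[j]? = ((listM F).flatMap (blockList F))[j]? := rfl
  have hb2 : (bigL F)[j+1]? = ((listM F).flatMap (blockList F))[j+1]? := rfl
  exact ⟨j, by rw [hb1, h1, hx'], by rw [hb2, h2, hFx]⟩

/-! ### injectivity -/

lemma bigL_injective : Function.Injective (bigL (α := α)) := by
  intro F₁ F₂ h
  have hp : (listM F₁).map (blockList F₁) = (listM F₂).map (blockList F₂) := by
    rw [← parse_flatMap F₁ (listM F₁) (sorted_listM F₁) (fun m hm => mem_listM.mp hm),
        ← parse_flatMap F₂ (listM F₂) (sorted_listM F₂) (fun m hm => mem_listM.mp hm)]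
    exact congrArg parse h
  apply Equiv.ext
  intro x
  obtain ⟨m, hm, hx⟩ := List.mem_flatMap.mp (mem_bigL F₁ x)
  have hb1 : blockList F₁ m ∈ (listM F₁).map (blockList F₁) := List.mem_map_of_mem hm
  rw [hp] at hb1
  obtain ⟨m₂, hm₂, hbeq⟩ := List.mem_map.mp hb1
  calc F₁ x = (blockList F₁ m).formPerm x := (formPerm_blockList F₁ hx).symm
    _ = (blockList F₂ m₂).formPerm x := by rw [hbeq]
    _ = F₂ x := formPerm_blockList F₂ (by rw [hbeq]; exact hx)


lemma getElem_congr_idx {β : Type*} {l : List β} {i j : ℕ} (h : i = j) (hi : i < l.length) :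
    l[i] = l[j]'(h ▸ hi) := by subst h; rfl

lemma getElem_congr_list {β : Type*} {l₁ l₂ : List β} (h : l₁ = l₂) {i : ℕ}
    (hi : i < l₁.length) : l₁[i] = l₂[i]'(h ▸ hi) := by subst h; rfl

/-! ### surjectivity of the word map, over `Fin N` -/

lemma bigL_surjective {N : ℕ} (w : List (Fin N)) (hnd : w.Nodup) (hmem : ∀ x, x ∈ w) :
    ∃ F : Perm (Fin N), bigL F = w := by
  have hlenw : w.length = N := by
    have h1 : w.toFinset = Finset.univ := Finset.eq_univ_iff_forall.mpr
      (fun y => List.mem_toFinset.mpr (hmem y))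
    rw [← List.toFinset_card_of_nodup hnd, h1, Finset.card_univ, Fintype.card_fin]
  have hlb : ∀ F : Perm (Fin N), (bigL F).length = N := fun F => by
    rw [length_bigL, Fintype.card_fin]
  let f : Perm (Fin N) → Fin N → Fin N := fun F i => (bigL F).get (Fin.cast (hlb F).symm i)
  have hfinj : ∀ F, Function.Injective (f F) := by
    intro F i j hij
    have h2 := List.nodup_iff_injective_get.mp (nodup_bigL F) hij
    have h3 := congrArg Fin.val h2
    exact Fin.ext h3
  let Φ : Perm (Fin N) → Perm (Fin N) :=
    fun F => Equiv.ofBijective (f F) ((Finite.injective_iff_bijective).mp (hfinj F))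
  have hΦinj : Function.Injective Φ := by
    intro F₁ F₂ h
    apply bigL_injective
    apply List.ext_get (by rw [hlb, hlb])
    intro i h₁ h₂
    exact DFunLike.congr_fun h (⟨i, (hlb F₁) ▸ h₁⟩ : Fin N)
  let g : Fin N → Fin N := fun i => w.get (Fin.cast hlenw.symm i)
  have hginj : Function.Injective g := by
    intro i j hij
    have h3 := congrArg Fin.val (List.nodup_iff_injective_get.mp hnd hij)
    exact Fin.ext h3
  obtain ⟨F, hF⟩ := (Finite.injective_iff_surjective.mp hΦinj)
    (Equiv.ofBijective g (Finite.injective_iff_bijective.mp hginj))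
  refine ⟨F, ?_⟩
  apply List.ext_get (by rw [hlb, hlenw])
  intro i h₁ h₂
  exact DFunLike.congr_fun hF (⟨i, (hlb F) ▸ h₁⟩ : Fin N)

/-! ### the main construction -/

def bigList {n : ℕ} (π : Perm (Fin n)) : List (Fin (n+1)) :=
  Fin.last n :: (bigL (finRotate n * π)).map Fin.castSucc

def toSigma {n : ℕ} (π : Perm (Fin n)) : Perm (Fin (n + 1)) := (bigList π).formPerm

lemma length_bigList {n : ℕ} (π : Perm (Fin n)) : (bigList π).length = n + 1 := by
  simp [bigList, length_bigL]

lemma nodup_bigList {n : ℕ} (π : Perm (Fin n)) : (bigList π).Nodup := by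
  rw [bigList, List.nodup_cons]
  refine ⟨?_, (nodup_bigL _).map (Fin.castSucc_injective n)⟩
  simp only [List.mem_map, not_exists, not_and]
  intro x _
  exact Fin.ne_of_lt (Fin.castSucc_lt_last x)

lemma mem_bigList {n : ℕ} (π : Perm (Fin n)) (y : Fin (n+1)) : y ∈ bigList π := by
  rcases Fin.eq_castSucc_or_eq_last y with ⟨j, rfl⟩ | rfl
  · exact List.mem_cons_of_mem _ (List.mem_map_of_mem (mem_bigL _ j))
  · exact List.mem_cons_self

lemma getElem_zero_bigList {n : ℕ} (π : Perm (Fin n)) (h : 0 < (bigList π).length) :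
    (bigList π)[0] = Fin.last n := rfl

lemma pow_toSigma_apply {n : ℕ} (π : Perm (Fin n)) (i : ℕ) (hi : i < n + 1) :
    (toSigma π ^ i) (Fin.last n) = (bigList π)[i]'(by rw [length_bigList]; exact hi) := by
  have h0 : 0 < (bigList π).length := by rw [length_bigList]; omega
  have h := List.formPerm_pow_apply_getElem (bigList π) (nodup_bigList π) i 0 h0
  rw [getElem_zero_bigList π h0] at h
  have hidx : (0 + i) % (bigList π).length = i := by
    rw [length_bigList, Nat.zero_add]; exact Nat.mod_eq_of_lt hi
  exact h.trans (getElem_congr_idx hidx _)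

lemma isFullCycle_toSigma {n : ℕ} (π : Perm (Fin n)) : IsFullCycle (toSigma π) := by
  intro x y
  obtain ⟨ix, hix, hx⟩ := List.mem_iff_getElem.mp (mem_bigList π x)
  obtain ⟨iy, hiy, hy⟩ := List.mem_iff_getElem.mp (mem_bigList π y)
  refine ⟨(n + 1 - ix) + iy, ?_⟩
  rw [← hx, ← hy]
  have h := List.formPerm_pow_apply_getElem (bigList π) (nodup_bigList π) ((n+1-ix)+iy) ix hix
  have hixn : ix < n + 1 := by rw [← length_bigList π]; exact hix
  have hiyn : iy < n + 1 := by rw [← length_bigList π]; exact hiy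
  have hidx : (ix + ((n+1-ix)+iy)) % (bigList π).length = iy := by
    rw [length_bigList, show ix + ((n+1-ix)+iy) = (n+1) + iy by omega, Nat.add_mod_left]
    exact Nat.mod_eq_of_lt hiyn
  exact h.trans (getElem_congr_idx hidx _)

lemma toSigma_injective {n : ℕ} : Function.Injective (toSigma (n := n)) := by
  intro π₁ π₂ h
  have hlist : bigList π₁ = bigList π₂ := by
    apply List.ext_getElem (by rw [length_bigList, length_bigList])
    intro i h₁ h₂
    have h₁' : i < n + 1 := by rw [← length_bigList π₁]; exact h₁
    have h₂' : i < n + 1 := by rw [← length_bigList π₂]; exact h₂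
    rw [← pow_toSigma_apply π₁ i h₁', ← pow_toSigma_apply π₂ i h₂', h]
  have htail : (bigL (finRotate n * π₁)).map Fin.castSucc
      = (bigL (finRotate n * π₂)).map Fin.castSucc := by
    have h2 := congrArg List.tail hlist
    simpa [bigList] using h2
  have hF : finRotate n * π₁ = finRotate n * π₂ :=
    bigL_injective ((List.map_injective_iff.mpr (Fin.castSucc_injective n)) htail)
  exact mul_left_cancel hF

lemma toSigma_apply_castSucc {n : ℕ} (π : Perm (Fin n)) (i : ℕ) (hi : i < n) :
    toSigma π (Fin.castSucc ((bigL (finRotate n * π))[i]'(by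
        rw [length_bigL, Fintype.card_fin]; exact hi)))
      = if h : i + 1 < n
        then Fin.castSucc ((bigL (finRotate n * π))[i+1]'(by
          rw [length_bigL, Fintype.card_fin]; exact h))
        else Fin.last n := by
  have hw : (bigL (finRotate n * π)).length = n := by rw [length_bigL, Fintype.card_fin]
  have hlen : (bigList π).length = n + 1 := length_bigList π
  have hi1 : i + 1 < (bigList π).length := by omega
  have hconsL : bigList π = Fin.last n :: (bigL (finRotate n * π)).map Fin.castSucc := rfl
  have hcast : (bigList π)[i+1]'hi1 = Fin.castSucc ((bigL (finRotate n * π))[i]'(by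
      rw [hw]; exact hi)) := by
    refine (getElem_congr_list hconsL hi1).trans ?_
    rw [List.getElem_cons_succ, List.getElem_map]
  have happ := List.formPerm_apply_getElem (bigList π) (nodup_bigList π) (i+1) hi1
  rw [hcast] at happ
  rw [show toSigma π = (bigList π).formPerm from rfl, happ]
  by_cases h : i + 1 < n
  · rw [dif_pos h]
    have hidx : (i + 1 + 1) % (bigList π).length = i + 1 + 1 := by
      rw [hlen]; exact Nat.mod_eq_of_lt (by omega)
    refine (getElem_congr_idx hidx _).trans ?_
    refine (getElem_congr_list hconsL (by rw [hlen]; omega)).trans ?_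
    rw [List.getElem_cons_succ, List.getElem_map]
  · rw [dif_neg h]
    have hidx : (i + 1 + 1) % (bigList π).length = 0 := by
      rw [hlen, show i + 1 + 1 = n + 1 by omega, Nat.mod_self]
    exact (getElem_congr_idx hidx _).trans (getElem_zero_bigList π (by rw [hlen]; omega))


/-! ### condition translation -/

lemma min_fin_eq_zero {m : ℕ} :
    (Finset.univ.min' Finset.univ_nonempty : Fin (m+1)) = 0 :=
  _root_.le_antisymm (Finset.min'_le _ _ (Finset.mem_univ _)) (Fin.zero_le _)

lemma cond_of_derangement {n : ℕ} (π : Perm (Fin n)) (hder : ∀ x, π x ≠ x) :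
    ∀ j : Fin n, toSigma π j.castSucc ≠ j.succ := by
  cases n with
  | zero => intro j; exact j.elim0
  | succ m =>
  intro j heq
  have hw : (bigL (finRotate (m+1) * π)).length = m + 1 := by
    rw [length_bigL, Fintype.card_fin]
  obtain ⟨i, hi, hij⟩ := List.mem_iff_getElem.mp (mem_bigL (finRotate (m+1) * π) j)
  have hi' : i < m + 1 := by rw [hw] at hi; exact hi
  have happ := toSigma_apply_castSucc π i hi'
  rw [hij] at happ
  by_cases hlt : i + 1 < m + 1
  · rw [dif_pos hlt] at happ
    rw [happ] at heq
    have hval : ((bigL (finRotate (m+1) * π))[i+1]'(by rw [hw]; exact hlt)).val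
        = j.val + 1 := by
      have h2 := congrArg Fin.val heq
      simpa [Fin.coe_castSucc, Fin.val_succ] using h2
    have hch := chain'_bigL (finRotate (m+1) * π)
    rw [List.isChain_iff_getElem] at hch
    have hrel := hch i (by rw [hw]; omega)
    rw [hij] at hrel
    rcases hrel with hFr | hlt2
    · rw [hFr] at hval
      rw [Equiv.Perm.mul_apply, finRotate_succ_apply, Fin.val_add_one] at hval
      by_cases hl : π j = Fin.last m
      · rw [if_pos hl] at hval; omega
      · rw [if_neg hl] at hval
        exact hder j (Fin.ext (by omega))
    · have hv2 : ((bigL (finRotate (m+1) * π))[i+1]'(by rw [hw]; exact hlt)).val < j.val := hlt2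
      omega
  · rw [dif_neg hlt] at happ
    rw [happ] at heq
    have hjval : j.val = m := by
      have h2 := congrArg Fin.val heq
      simp only [Fin.val_last, Fin.val_succ] at h2
      omega
    have hne : bigL (finRotate (m+1) * π) ≠ [] := bigL_ne_nil _
    have hgl : (bigL (finRotate (m+1) * π)).getLast hne = j := by
      rw [List.getLast_eq_getElem]
      exact (getElem_congr_idx (show (bigL (finRotate (m+1) * π)).length - 1 = i by
        rw [hw]; omega) _).trans hij
    have hbot := apply_getLast_bigL (finRotate (m+1) * π) hne
    rw [hgl, min_fin_eq_zero, Equiv.Perm.mul_apply, finRotate_succ_apply] at hbot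
    have hπl : π j = Fin.last m := by
      by_contra hc
      have h2 := congrArg Fin.val hbot
      rw [Fin.val_add_one, if_neg hc] at h2
      simp at h2
    exact hder j (by rw [hπl]; exact Fin.ext (by simp [Fin.val_last, hjval]))

lemma derangement_of_cond {n : ℕ} (π : Perm (Fin n))
    (hcond : ∀ j : Fin n, toSigma π j.castSucc ≠ j.succ) :
    ∀ x, π x ≠ x := by
  cases n with
  | zero => intro x; exact x.elim0
  | succ m =>
  intro x hx
  have hw : (bigL (finRotate (m+1) * π)).length = m + 1 := by
    rw [length_bigL, Fintype.card_fin]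
  have hFx : (finRotate (m+1) * π) x = x + 1 := by
    rw [Equiv.Perm.mul_apply, hx, finRotate_succ_apply]
  by_cases hxl : x = Fin.last m
  · have hFx0 : (finRotate (m+1) * π) x = 0 := by
      rw [hFx, hxl, Fin.last_add_one]
    have hne : bigL (finRotate (m+1) * π) ≠ [] := bigL_ne_nil _
    have hbot := apply_getLast_bigL (finRotate (m+1) * π) hne
    rw [min_fin_eq_zero] at hbot
    have hgl : (bigL (finRotate (m+1) * π)).getLast hne = x := by
      rw [← hFx0] at hbot
      exact (finRotate (m+1) * π).injective hbot
    have hidx : (bigL (finRotate (m+1) * π))[m]'(by rw [hw]; omega) = x := by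
      rw [← hgl, List.getLast_eq_getElem]
      exact (getElem_congr_idx (show m = (bigL (finRotate (m+1) * π)).length - 1 by
        rw [hw]; omega) _)
    have happ := toSigma_apply_castSucc π m (by omega)
    rw [hidx, dif_neg (by omega)] at happ
    apply hcond x
    rw [happ]
    exact (Fin.ext (by simp [hxl, Fin.val_succ, Fin.val_last])).symm
  · have hxv : x.val < m := by
      have h2 := x.2
      have hne : x.val ≠ m := fun hc => hxl (Fin.ext (by simp [hc, Fin.val_last]))
      omega
    have hlt : x < (finRotate (m+1) * π) x := by
      rw [hFx]
      have h3 : (x + 1).val = x.val + 1 := by rw [Fin.val_add_one, if_neg hxl]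
      exact Fin.lt_def.mpr (by omega)
    have hnotmin : (finRotate (m+1) * π) x ≠ cmin (finRotate (m+1) * π) x := by
      intro hc
      have h4 := cmin_le_self (finRotate (m+1) * π) x
      rw [← hc] at h4
      exact absurd hlt (not_lt.mpr h4)
    obtain ⟨jdx, h1, h2⟩ := adj_bigL (finRotate (m+1) * π) hnotmin
    obtain ⟨hjlen0, hjval0⟩ := List.getElem?_eq_some_iff.mp h1
    obtain ⟨hjlen, hjval⟩ := List.getElem?_eq_some_iff.mp h2
    have hj1 : jdx + 1 < m + 1 := by rw [← hw]; exact hjlen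
    have happ := toSigma_apply_castSucc π jdx (by omega)
    rw [hjval0, dif_pos hj1, hjval] at happ
    apply hcond x
    rw [happ, hFx]
    exact Fin.ext (by rw [Fin.coe_castSucc, Fin.val_succ, Fin.val_add_one, if_neg hxl])

/-! ### surjectivity -/

lemma toSigma_surjective_aux {n : ℕ} (σ' : Perm (Fin (n+1))) (hfc : IsFullCycle σ') :
    ∃ π : Perm (Fin n), toSigma π = σ' := by
  cases n with
  | zero =>
    refine ⟨1, ?_⟩
    apply Equiv.ext; intro x
    apply Fin.ext
    have h1 := ((toSigma (1 : Perm (Fin 0))) x).isLt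
    have h2 := (σ' x).isLt
    omega
  | succ m =>
  have hnofix : ∀ x, σ' x ≠ x := by
    intro x hx
    obtain ⟨y, hy⟩ := exists_ne x
    obtain ⟨i, hi⟩ := hfc x y
    have hpow : ∀ k, (σ' ^ k) x = x := by
      intro k
      induction k with
      | zero => rfl
      | succ k ih => rw [pow_succ, Equiv.Perm.mul_apply, hx, ih]
    exact hy (hi.symm.trans (hpow i))
  have hsame : ∀ y, σ'.SameCycle (Fin.last (m+1)) y := by
    intro y
    obtain ⟨i, hi⟩ := hfc (Fin.last (m+1)) y
    exact ⟨(i : ℤ), by rw [zpow_natCast]; exact hi⟩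
  have hform : (blockList σ' (Fin.last (m+1))).formPerm = σ' := by
    apply Equiv.ext
    intro y
    exact formPerm_blockList σ' (mem_blockList.mpr (hsame y))
  have htail : ∀ y ∈ (blockList σ' (Fin.last (m+1))).tail, y ≠ Fin.last (m+1) := by
    intro y hy hc
    have h1 := nodup_blockList σ' (Fin.last (m+1))
    rw [blockList_head σ' (Fin.last (m+1))] at h1
    exact (List.nodup_cons.mp h1).1 (hc ▸ hy)
  set w₀ := (blockList σ' (Fin.last (m+1))).tail.attach.map
    (fun z => z.1.castPred (htail z.1 z.2)) with hw₀
  have hmap : w₀.map Fin.castSucc = (blockList σ' (Fin.last (m+1))).tail := by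
    rw [hw₀, List.map_map]
    have h5 : (Fin.castSucc ∘ fun z : {y // y ∈ (blockList σ' (Fin.last (m+1))).tail} =>
        (z.1.castPred (htail z.1 z.2))) = fun z => z.1 := by
      funext z; exact Fin.castSucc_castPred _ _
    rw [h5, List.attach_map_subtype_val]
  have hw₀nd : w₀.Nodup := by
    have h1 : ((blockList σ' (Fin.last (m+1))).tail).Nodup := by
      have h2 := nodup_blockList σ' (Fin.last (m+1))
      rw [blockList_head σ' (Fin.last (m+1))] at h2
      exact (List.nodup_cons.mp h2).2
    rw [← hmap] at h1
    exact h1.of_map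
  have hw₀mem : ∀ x : Fin (m+1), x ∈ w₀ := by
    intro x
    have hxmem : x.castSucc ∈ blockList σ' (Fin.last (m+1)) := mem_blockList.mpr (hsame _)
    rw [blockList_head σ' (Fin.last (m+1))] at hxmem
    rcases List.mem_cons.mp hxmem with h | h
    · exact absurd h (Fin.ne_of_lt (Fin.castSucc_lt_last x))
    · rw [← hmap] at h
      obtain ⟨x', hx', he⟩ := List.mem_map.mp h
      rwa [← Fin.castSucc_injective _ he]
  obtain ⟨F, hFw⟩ := bigL_surjective w₀ hw₀nd hw₀mem
  refine ⟨(finRotate (m+1))⁻¹ * F, ?_⟩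
  have hθ : finRotate (m+1) * ((finRotate (m+1))⁻¹ * F) = F := mul_inv_cancel_left _ _
  have hbl : bigList ((finRotate (m+1))⁻¹ * F)
      = Fin.last (m+1) :: (bigL (finRotate (m+1) * ((finRotate (m+1))⁻¹ * F))).map
        Fin.castSucc := rfl
  rw [show toSigma ((finRotate (m+1))⁻¹ * F)
    = (bigList ((finRotate (m+1))⁻¹ * F)).formPerm from rfl, hbl, hθ, hFw, hmap,
    ← blockList_head σ' (Fin.last (m+1)), hform]

end S14

/-- The number of derangements of `[n]` equals the number of `(n+1)`-cycles `σ` in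
`S_{n+1}` such that `σ(j) ≠ j+1` for all `j ∈ [n]` (here `j+1` is the genuine successor,
no reduction mod `n+1`; there is no condition at `j = n+1`). -/
theorem stmt14 (n : ℕ) :
    Set.ncard {π : Equiv.Perm (Fin n) | ∀ x : Fin n, π x ≠ x}
    =
    Set.ncard {σ : Equiv.Perm (Fin (n + 1)) | IsFullCycle σ ∧
        ∀ j : Fin n, σ j.castSucc ≠ j.succ} := by
  classical
  have himg : S14.toSigma '' {π : Equiv.Perm (Fin n) | ∀ x : Fin n, π x ≠ x}
      = {σ : Equiv.Perm (Fin (n+1)) | IsFullCycle σ ∧ ∀ j : Fin n, σ j.castSucc ≠ j.succ} := by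
    ext σ'
    constructor
    · rintro ⟨π, hπ, rfl⟩
      exact ⟨S14.isFullCycle_toSigma π, S14.cond_of_derangement π hπ⟩
    · rintro ⟨hfc, hcond⟩
      obtain ⟨π, rfl⟩ := S14.toSigma_surjective_aux σ' hfc
      exact ⟨π, S14.derangement_of_cond π hcond, rfl⟩
  rw [← himg, Set.ncard_image_of_injective _ S14.toSigma_injective]
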